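/- Suppose S = ∞ and there exist z̃ > 1, C₁ > 0 and γ₁ ∈ [0,1] such that m(z) ≤ C₁ z^{γ₁} for all z > z̃. Then there exist constants C̃₁, C̃₂ > 0 such that f(z) ≥ −C̃₁ + C̃₂ z^{1−γ₁/2} for all z ≥ 0. -/

import Mathlib

open MeasureTheory Set Filter Topology

/-- Linear lower bound for a positive concave function on `(0,∞)`. -/
lemma linear_lb_of_concave {m : ℝ → ℝ} (hconc : ConcaveOn ℝ (Ioi 0) m)
    (hpos : ∀ z : ℝ, 0 < z → 0 < m z) {a r : ℝ} (ha : 0 < a) (hr : 0 < r) (hra : r ≤ a) :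
    r / a * m a ≤ m r := by
  rcases eq_or_lt_of_le hra with rfl | hlt
  · rw [div_self (ne_of_gt ha), one_mul]
  · have key : ∀ ε : ℝ, 0 < ε → ε < r → (r - ε) / (a - ε) * m a ≤ m r := by
      intro ε hε hεr
      have hεa : ε < a := hεr.trans hlt
      have hd : 0 < a - ε := by linarith
      set t : ℝ := (a - r) / (a - ε) with ht
      have ht0 : 0 ≤ t := div_nonneg (by linarith) hd.le
      have ht1 : 1 - t = (r - ε) / (a - ε) := by rw [ht]; field_simp; ring
      have h1t : 0 ≤ 1 - t := by rw [ht1]; exact div_nonneg (by linarith) hd.le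
      have hcomb := hconc.2 (mem_Ioi.2 hε) (mem_Ioi.2 ha) ht0 h1t (by ring)
      have hx : t • ε + (1 - t) • a = r := by
        simp only [smul_eq_mul, ht, ht1]; field_simp; ring
      rw [hx] at hcomb
      have : (1 - t) * m a ≤ m r := by
        simp only [smul_eq_mul] at hcomb
        nlinarith [mul_nonneg ht0 (hpos ε hε).le]
      rwa [ht1] at this
    have htend : Tendsto (fun ε : ℝ => (r - ε) / (a - ε) * m a) (𝓝[>] 0)
        (𝓝 (r / a * m a)) := by
      apply Tendsto.mono_left _ nhdsWithin_le_nhds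
      have : ContinuousAt (fun ε : ℝ => (r - ε) / (a - ε) * m a) 0 := by
        apply ContinuousAt.mul _ continuousAt_const
        exact ContinuousAt.div (by fun_prop) (by fun_prop) (by simp; linarith)
      simpa using this.tendsto
    refine le_of_tendsto htend ?_
    filter_upwards [Ioo_mem_nhdsGT_of_mem (by constructor <;> [exact le_rfl; exact hr])]
      with ε hε
    exact key ε hε.1 hε.2

theorem f_lower_bound_power
    (m : ℝ → ℝ)
    (hm_c2 : ContDiffOn ℝ 2 m (Ioi 0))
    (hm_pos : ∀ z : ℝ, 0 < z → 0 < m z)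
    (hm_conc : ∀ z : ℝ, 0 < z → deriv (deriv m) z ≤ 0)
    (hm0 : Tendsto m (𝓝[>] (0 : ℝ)) (𝓝 0))
    (ztilde C₁ γ₁ : ℝ) (hzt : 1 < ztilde) (hC₁ : 0 < C₁)
    (hγ₁ : γ₁ ∈ Icc (0 : ℝ) 1)
    (hup : ∀ z : ℝ, ztilde < z → m z ≤ C₁ * z ^ γ₁) :
    ∃ C₁' C₂' : ℝ, 0 < C₁' ∧ 0 < C₂' ∧ ∀ z : ℝ, 0 ≤ z →
      -C₁' + C₂' * z ^ (1 - γ₁ / 2) ≤ ∫ r in Ioo (0 : ℝ) z, Real.sqrt (2 / m r) := by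
  have hIoi : IsOpen (Ioi (0:ℝ)) := isOpen_Ioi
  -- concavity
  have hconc : ConcaveOn ℝ (Ioi 0) m := by
    have hderiv : ContDiffOn ℝ 1 (deriv m) (Ioi 0) :=
      hm_c2.deriv_of_isOpen hIoi (by norm_num)
    refine concaveOn_of_deriv2_nonpos (convex_Ioi 0) hm_c2.continuousOn ?_ ?_ ?_
    · rw [hIoi.interior_eq]
      exact (hm_c2.of_le one_le_two).differentiableOn (by norm_num)
    · rw [hIoi.interior_eq]
      exact hderiv.differentiableOn (by norm_num)
    · rw [hIoi.interior_eq]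
      intro x hx
      simpa [Function.iterate_succ] using hm_conc x hx
  -- continuity of the integrand
  have hgcont : ContinuousOn (fun r => Real.sqrt (2 / m r)) (Ioi 0) := by
    apply ContinuousOn.sqrt
    exact continuousOn_const.div hm_c2.continuousOn (fun x hx => (hm_pos x hx).ne')
  -- integrability on Ioo 0 z for all z > 0
  have hint : ∀ z : ℝ, 0 < z → IntegrableOn (fun r => Real.sqrt (2 / m r)) (Ioo 0 z) := by
    intro z hz
    have hmz := hm_pos z hz
    set C : ℝ := Real.sqrt (2 * z / m z) with hC
    have hdom : Integrable (fun r : ℝ => C * r ^ (-(1:ℝ)/2)) (volume.restrict (Ioo 0 z)) := by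
      have : IntervalIntegrable (fun r : ℝ => r ^ (-(1:ℝ)/2)) volume 0 z :=
        intervalIntegral.intervalIntegrable_rpow' (by norm_num)
      have h2 : IntegrableOn (fun r : ℝ => r ^ (-(1:ℝ)/2)) (Ioo 0 z) :=
        ((this.1).mono_set Ioo_subset_Ioc_self)
      exact (h2.const_mul C)
    refine Integrable.mono' hdom ?_ ?_
    · exact ((hgcont.mono Ioo_subset_Ioi_self).aestronglyMeasurable measurableSet_Ioo)
    · rw [ae_restrict_iff' measurableSet_Ioo]
      filter_upwards with r hr
      have hr0 : 0 < r := hr.1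
      have hlin : r / z * m z ≤ m r :=
        linear_lb_of_concave hconc hm_pos hz hr0 hr.2.le
      have hmr : 0 < m r := hm_pos r hr0
      have h1 : 2 / m r ≤ 2 * z / m z * r⁻¹ := by
        rw [div_le_iff₀ hmr]
        have h2 : 0 < r / z * m z := by positivity
        calc (2:ℝ) = 2 * z / m z * r⁻¹ * (r / z * m z) := by field_simp
          _ ≤ 2 * z / m z * r⁻¹ * m r := by
              apply mul_le_mul_of_nonneg_left hlin; positivity
      rw [Real.norm_eq_abs, abs_of_nonneg (Real.sqrt_nonneg _)]
      calc Real.sqrt (2 / m r) ≤ Real.sqrt (2 * z / m z * r⁻¹) := Real.sqrt_le_sqrt h1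
        _ = C * r ^ (-(1:ℝ)/2) := by
            rw [Real.sqrt_mul (by positivity), hC]
            congr 1
            rw [show (-(1:ℝ)/2) = (-1) * ((1:ℝ)/2) by norm_num, Real.rpow_mul hr0.le,
              Real.rpow_neg_one, ← Real.sqrt_eq_rpow, Real.sqrt_inv]
  -- constants
  have hγ0 := hγ₁.1
  have hγ1 := hγ₁.2
  set p : ℝ := 1 - γ₁ / 2 with hp
  have hp0 : 0 < p := by rw [hp]; linarith
  set c : ℝ := Real.sqrt (2 / C₁) with hc
  have hc0 : 0 < c := Real.sqrt_pos.2 (by positivity)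
  set K : ℝ := c / p with hK
  have hK0 : 0 < K := div_pos hc0 hp0
  have hzt0 : (0:ℝ) < ztilde := by linarith
  refine ⟨K * ztilde ^ p, K, by positivity, hK0, ?_⟩
  intro z hz
  rcases le_or_gt z ztilde with hle | hlt
  · -- small z : LHS ≤ 0 ≤ integral
    have h1 : z ^ p ≤ ztilde ^ p := Real.rpow_le_rpow hz hle hp0.le
    have h2 : (0:ℝ) ≤ ∫ r in Ioo (0 : ℝ) z, Real.sqrt (2 / m r) :=
      setIntegral_nonneg measurableSet_Ioo (fun r _ => Real.sqrt_nonneg _)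
    nlinarith
  · -- large z
    have hz0 : 0 < z := hzt0.trans hlt
    have hintz := hint z hz0
    have hsub : Ioo ztilde z ⊆ Ioo 0 z := fun r hr => ⟨hzt0.trans hr.1, hr.2⟩
    -- pointwise bound on (ztilde, z)
    have hpt : ∀ r ∈ Ioo ztilde z, c * r ^ (-(γ₁/2)) ≤ Real.sqrt (2 / m r) := by
      intro r hr
      have hr0 : (0:ℝ) < r := hzt0.trans hr.1
      have hmr := hm_pos r hr0
      have hub := hup r hr.1
      have hrp : (0:ℝ) < r ^ γ₁ := Real.rpow_pos_of_pos hr0 _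
      have h1 : 2 / (C₁ * r ^ γ₁) ≤ 2 / m r :=
        div_le_div_of_nonneg_left (by norm_num) hmr hub
      calc c * r ^ (-(γ₁/2))
          = Real.sqrt (2 / C₁) * Real.sqrt (r ^ (-γ₁)) := by
            rw [hc]; congr 1
            rw [Real.sqrt_eq_rpow, ← Real.rpow_mul hr0.le]
            ring_nf
        _ = Real.sqrt (2 / (C₁ * r ^ γ₁)) := by
            rw [← Real.sqrt_mul (by positivity)]
            congr 1
            rw [Real.rpow_neg hr0.le]
            field_simp
        _ ≤ Real.sqrt (2 / m r) := Real.sqrt_le_sqrt h1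
    -- integrability of the power on (ztilde, z)
    have hintp : IntegrableOn (fun r : ℝ => c * r ^ (-(γ₁/2))) (Ioo ztilde z) := by
      have : IntervalIntegrable (fun r : ℝ => r ^ (-(γ₁/2))) volume ztilde z :=
        intervalIntegral.intervalIntegrable_rpow' (by linarith)
      exact (((this.1).mono_set Ioo_subset_Ioc_self).const_mul c)
    have hstep1 : (∫ r in Ioo ztilde z, Real.sqrt (2 / m r))
        ≤ ∫ r in Ioo (0:ℝ) z, Real.sqrt (2 / m r) := by
      apply setIntegral_mono_set hintz
      · filter_upwards with r using Real.sqrt_nonneg _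
      · exact HasSubset.Subset.eventuallyLE hsub
    have hstep2 : (∫ r in Ioo ztilde z, c * r ^ (-(γ₁/2)))
        ≤ ∫ r in Ioo ztilde z, Real.sqrt (2 / m r) := by
      apply setIntegral_mono_on hintp (hintz.mono_set hsub) measurableSet_Ioo hpt
    -- compute the power integral
    have hcomp : (∫ r in Ioo ztilde z, c * r ^ (-(γ₁/2)))
        = c * ((z ^ p - ztilde ^ p) / p) := by
      rw [integral_const_mul]
      congr 1
      rw [← integral_Ioc_eq_integral_Ioo, ← intervalIntegral.integral_of_le hlt.le,
        integral_rpow (Or.inl (by linarith))]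
      rw [show -(γ₁/2) + 1 = 1 - γ₁/2 by ring]
    have hfinal : -(K * ztilde ^ p) + K * z ^ p = c * ((z ^ p - ztilde ^ p) / p) := by
      rw [hK]; field_simp; ring
    calc -(K * ztilde ^ p) + K * z ^ p = c * ((z ^ p - ztilde ^ p) / p) := hfinal
      _ = ∫ r in Ioo ztilde z, c * r ^ (-(γ₁/2)) := hcomp.symm
      _ ≤ ∫ r in Ioo ztilde z, Real.sqrt (2 / m r) := hstep2
      _ ≤ ∫ r in Ioo (0:ℝ) z, Real.sqrt (2 / m r) := hstep1
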